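/- Let m ≥ 1 and let v ∈ ℂ^m be a unit vector. Then the m×m Hermitian matrix diag(|v₀|², …, |v_{m−1}|²) − (1/m)·v v† is positive semidefinite. Consequently, the 2m×2m matrix D_v = (1/m)·(v v†) ⊗ E00 + (diag(|v₀|², …, |v_{m−1}|²) − (1/m)·v v†) ⊗ E11 is positive semidefinite, Hermitian, and its entries sum to 1; i.e., D_v is a strongly positive decoherence functional. -/

import Mathlib

open Matrix BigOperators ComplexOrder Kronecker

/-- The rank-one projector `E00 = e₀e₀†` on `ℂ²`. -/
def E00 : Matrix (Fin 2) (Fin 2) ℂ := !![1, 0; 0, 0]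

/-- The rank-one projector `E11 = e₁e₁†` on `ℂ²`. -/
def E11 : Matrix (Fin 2) (Fin 2) ℂ := !![0, 0; 0, 1]

/-- The `2m × 2m` matrix
`D_v = (1/m)·(v v†) ⊗ E00 + (diag(|v₀|²,…,|v_{m−1}|²) − (1/m)·v v†) ⊗ E11`,
indexed by `Fin m × Fin 2`. -/
noncomputable def Dv {m : ℕ} (v : Fin m → ℂ) :
    Matrix (Fin m × Fin 2) (Fin m × Fin 2) ℂ :=
  (1 / (m : ℂ)) • ((vecMulVec v (star v)) ⊗ₖ E00) +
    ((Matrix.diagonal fun a => ((Complex.normSq (v a) : ℝ) : ℂ)) -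
        (1 / (m : ℂ)) • vecMulVec v (star v)) ⊗ₖ E11

lemma quadE00 {m : ℕ} (M : Matrix (Fin m) (Fin m) ℂ) (x : Fin m × Fin 2 → ℂ) :
    star x ⬝ᵥ ((M ⊗ₖ E00) *ᵥ x) =
      star (fun a => x (a, 0)) ⬝ᵥ (M *ᵥ fun a => x (a, 0)) := by
  simp [dotProduct, mulVec, Fintype.sum_prod_type, Fin.sum_univ_two, E00]

lemma quadE11 {m : ℕ} (M : Matrix (Fin m) (Fin m) ℂ) (x : Fin m × Fin 2 → ℂ) :
    star x ⬝ᵥ ((M ⊗ₖ E11) *ᵥ x) =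
      star (fun a => x (a, 1)) ⬝ᵥ (M *ᵥ fun a => x (a, 1)) := by
  simp [dotProduct, mulVec, Fintype.sum_prod_type, Fin.sum_univ_two, E11]

lemma quad_vvt {m : ℕ} (v y : Fin m → ℂ) :
    star y ⬝ᵥ (vecMulVec v (star v) *ᵥ y) =
      ((Complex.normSq (star y ⬝ᵥ v) : ℝ) : ℂ) := by
  have h1 : star y ⬝ᵥ (vecMulVec v (star v) *ᵥ y)
      = (star y ⬝ᵥ v) * (star v ⬝ᵥ y) := by
    simp [dotProduct, mulVec, vecMulVec_apply, Finset.mul_sum, Finset.sum_mul]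
    rw [Finset.sum_comm]
    congr 1; ext a; congr 1; ext b; ring
  rw [h1]
  have h2 : star v ⬝ᵥ y = starRingEnd ℂ (star y ⬝ᵥ v) := by
    simp [dotProduct, map_sum, mul_comm]
  rw [h2, Complex.mul_conj]

lemma quad_diag {m : ℕ} (v y : Fin m → ℂ) :
    star y ⬝ᵥ ((Matrix.diagonal fun a => ((Complex.normSq (v a) : ℝ) : ℂ)) *ᵥ y)
      = ((∑ a, Complex.normSq (v a) * Complex.normSq (y a) : ℝ) : ℂ) := by
  push_cast
  simp only [dotProduct, mulVec_diagonal, Pi.star_apply]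
  refine Finset.sum_congr rfl fun a _ => ?_
  rw [show ((Complex.normSq (y a) : ℝ) : ℂ) = y a * starRingEnd ℂ (y a) from
    (Complex.mul_conj _).symm]
  simp only [Complex.star_def]
  ring

/-- Cauchy–Schwarz step : `|⟨x,v⟩|² ≤ m · Σ |vₐ|²|xₐ|²`. -/
lemma cs_ineq {m : ℕ} (v x : Fin m → ℂ) :
    Complex.normSq (star x ⬝ᵥ v) ≤
      (m : ℝ) * ∑ a, Complex.normSq (v a) * Complex.normSq (x a) := by
  have h1 : ‖star x ⬝ᵥ v‖ ≤ ∑ a, ‖star x a * v a‖ := by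
    simpa [dotProduct] using
      (norm_sum_le Finset.univ (fun a => star x a * v a))
  have h2 : (∑ a, ‖star x a * v a‖) ^ 2 ≤
      (m : ℝ) * ∑ a, ‖star x a * v a‖ ^ 2 := by
    simpa using sq_sum_le_card_mul_sum_sq
      (s := (Finset.univ : Finset (Fin m)))
      (f := fun a => ‖star x a * v a‖)
  calc Complex.normSq (star x ⬝ᵥ v)
      = ‖star x ⬝ᵥ v‖ ^ 2 := (Complex.sq_norm _).symm
    _ ≤ (∑ a, ‖star x a * v a‖) ^ 2 := by
        apply pow_le_pow_left₀ (norm_nonneg _) h1 2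
    _ ≤ (m : ℝ) * ∑ a, ‖star x a * v a‖ ^ 2 := h2
    _ = (m : ℝ) * ∑ a, Complex.normSq (v a) * Complex.normSq (x a) := by
        congr 1
        refine Finset.sum_congr rfl fun a _ => ?_
        rw [Complex.sq_norm, Complex.normSq_mul]
        simp [Complex.normSq_conj, mul_comm]

lemma diag_herm {m : ℕ} (v : Fin m → ℂ) :
    (Matrix.diagonal fun a => ((Complex.normSq (v a) : ℝ) : ℂ)).IsHermitian := by
  rw [Matrix.isHermitian_diagonal_iff]
  intro a
  show star _ = _
  simp [Complex.star_def, Complex.conj_ofReal]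

lemma vvt_herm {m : ℕ} (v : Fin m → ℂ) :
    (vecMulVec v (star v)).IsHermitian := by
  ext a b
  simp [Matrix.conjTranspose_apply, vecMulVec_apply, mul_comm]

lemma smul_vvt_herm {m : ℕ} (v : Fin m → ℂ) :
    ((1 / (m : ℂ)) • vecMulVec v (star v)).IsHermitian := by
  rw [Matrix.IsHermitian, Matrix.conjTranspose_smul, (vvt_herm v)]
  congr 1
  simp

lemma B_posSemidef {m : ℕ} (hm : 1 ≤ m) (v : Fin m → ℂ) :
    ((Matrix.diagonal fun a => ((Complex.normSq (v a) : ℝ) : ℂ)) -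
        (1 / (m : ℂ)) • vecMulVec v (star v)).PosSemidef := by
  have hm0 : (0 : ℝ) < m := by exact_mod_cast hm
  refine Matrix.PosSemidef.of_dotProduct_mulVec_nonneg ?_ ?_
  · exact (diag_herm v).sub (smul_vvt_herm v)
  · intro x
    rw [sub_mulVec, dotProduct_sub, smul_mulVec, dotProduct_smul,
      quad_diag, quad_vvt, smul_eq_mul]
    have : (1 / (m : ℂ)) * ((Complex.normSq (star x ⬝ᵥ v) : ℝ) : ℂ)
        = ((Complex.normSq (star x ⬝ᵥ v) / m : ℝ) : ℂ) := by
      push_cast; ring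
    rw [this, ← Complex.ofReal_sub, Complex.zero_le_real, sub_nonneg,
      div_le_iff₀ hm0, mul_comm]
    exact cs_ineq v x

lemma kronE00_herm {m : ℕ} {M : Matrix (Fin m) (Fin m) ℂ} (h : M.IsHermitian) :
    (M ⊗ₖ E00).IsHermitian := by
  ext ⟨a, i⟩ ⟨b, j⟩
  simp only [Matrix.conjTranspose_apply, kroneckerMap_apply, star_mul']
  fin_cases i <;> fin_cases j <;>
    simp [E00, ← Matrix.conjTranspose_apply, h.eq]

lemma kronE11_herm {m : ℕ} {M : Matrix (Fin m) (Fin m) ℂ} (h : M.IsHermitian) :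
    (M ⊗ₖ E11).IsHermitian := by
  ext ⟨a, i⟩ ⟨b, j⟩
  simp only [Matrix.conjTranspose_apply, kroneckerMap_apply, star_mul']
  fin_cases i <;> fin_cases j <;>
    simp [E11, ← Matrix.conjTranspose_apply, h.eq]

lemma sumE00 {m : ℕ} (M : Matrix (Fin m) (Fin m) ℂ) :
    (∑ p, ∑ q, (M ⊗ₖ E00) p q) = ∑ a, ∑ b, M a b := by
  simp [Fintype.sum_prod_type, Fin.sum_univ_two, E00]

lemma sumE11 {m : ℕ} (M : Matrix (Fin m) (Fin m) ℂ) :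
    (∑ p, ∑ q, (M ⊗ₖ E11) p q) = ∑ a, ∑ b, M a b := by
  simp [Fintype.sum_prod_type, Fin.sum_univ_two, E11]

theorem Dv_is_strongly_positive_DF (m : ℕ) (hm : 1 ≤ m)
    (v : Fin m → ℂ) (hv : star v ⬝ᵥ v = 1) :
    ((Matrix.diagonal fun a => ((Complex.normSq (v a) : ℝ) : ℂ)) -
        (1 / (m : ℂ)) • vecMulVec v (star v)).PosSemidef ∧
    (Dv v).PosSemidef ∧ (Dv v).IsHermitian ∧
    (∑ p, ∑ q, Dv v p q) = 1 := by
  have hm0 : (0 : ℝ) < m := by exact_mod_cast hm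
  have hB := B_posSemidef hm v
  have hDpsd : (Dv v).PosSemidef := by
    refine Matrix.PosSemidef.of_dotProduct_mulVec_nonneg ?_ ?_
    · -- Hermitian
      unfold Dv
      refine Matrix.IsHermitian.add ?_ (kronE11_herm hB.1)
      have hkr : ((1 : ℂ) / m) • ((vecMulVec v (star v)) ⊗ₖ E00) =
          (((1 : ℂ) / m) • vecMulVec v (star v)) ⊗ₖ E00 := by
        ext ⟨a, i⟩ ⟨b, j⟩
        simp [kroneckerMap_apply]
        ring
      rw [hkr]
      exact kronE00_herm (smul_vvt_herm v)
    · intro x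
      unfold Dv
      rw [add_mulVec, dotProduct_add, smul_mulVec, dotProduct_smul,
        quadE00, quadE11, smul_eq_mul, quad_vvt]
      apply add_nonneg
      · have : (1 / (m : ℂ)) *
            ((Complex.normSq (star (fun a => x (a, 0)) ⬝ᵥ v) : ℝ) : ℂ)
            = ((Complex.normSq (star (fun a => x (a, 0)) ⬝ᵥ v) / m : ℝ) : ℂ) := by
          push_cast; ring
        rw [this, Complex.zero_le_real]
        exact div_nonneg (Complex.normSq_nonneg _) hm0.le
      · exact hB.dotProduct_mulVec_nonneg _
  refine ⟨hB, hDpsd, hDpsd.1, ?_⟩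
  have hsplit : (∑ p, ∑ q, Dv v p q) =
      (1 / (m : ℂ)) * (∑ p, ∑ q, ((vecMulVec v (star v)) ⊗ₖ E00) p q) +
      ∑ p, ∑ q, (((Matrix.diagonal fun a => ((Complex.normSq (v a) : ℝ) : ℂ)) -
        (1 / (m : ℂ)) • vecMulVec v (star v)) ⊗ₖ E11) p q := by
    simp [Dv, Finset.sum_add_distrib, ← Finset.mul_sum]
  rw [hsplit, sumE00, sumE11]
  have hBsum : (∑ a, ∑ b, ((Matrix.diagonal fun a => ((Complex.normSq (v a) : ℝ) : ℂ)) -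
        (1 / (m : ℂ)) • vecMulVec v (star v)) a b) =
      (∑ a, ((Complex.normSq (v a) : ℝ) : ℂ)) -
        (1 / (m : ℂ)) * ∑ a, ∑ b, vecMulVec v (star v) a b := by
    simp [Matrix.sub_apply, Matrix.smul_apply, Matrix.diagonal_apply,
      Finset.sum_sub_distrib, ← Finset.mul_sum, smul_eq_mul, Finset.sum_ite_eq]
  rw [hBsum]
  have hT : (∑ a, ((Complex.normSq (v a) : ℝ) : ℂ)) = 1 := by
    rw [← hv]
    simp [dotProduct, Complex.normSq_eq_conj_mul_self, Complex.star_def]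
  rw [hT]
  ring
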